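/- Assume R is a local integral domain that is not a field, with principal maximal ideal 𝔪 = (p). Let I be a thick ideal of C_R all of whose objects are k-negligible (for example I = N_k). Then for every X ∈ I and a ∈ End(X) one has Tr_X(a) ∈ (p^k), so Tr^{(k)}_X(a) := p^{−k}·Tr_X(a) (the unique b ∈ R with p^k·b = Tr_X(a)) is well defined, and the family (Tr^{(k)}_X)_{X∈I} is a trace on I: (1) Tr^{(k)}_{U⊗W}(f) = Tr^{(k)}_U(E_U(f)) for all U ∈ I, W ∈ C_R and f ∈ End(U⊗W); (2) Tr^{(k)}_V(g∘f) = Tr^{(k)}_U(f∘g) for all U, V ∈ I and all f : V → U, g : U → V. -/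

import Mathlib

/-!
STATEMENT 2. Assume `R` is a local integral domain that is not a field, with
principal maximal ideal `𝔪 = (p)`.  Let `I` be a thick ideal of `C_R` all of whose
objects are `k`-negligible (for example `I = N_k`).  Then for every `X ∈ I` and
`a ∈ End(X)` one has `Tr_X(a) ∈ (p^k)`, so `Tr^{(k)}_X(a) := p^{−k}·Tr_X(a)` (the
unique `b ∈ R` with `p^k·b = Tr_X(a)`) is well defined, and the family
`(Tr^{(k)}_X)_{X∈I}` is a trace on `I`:
(1) `Tr^{(k)}_{U⊗W}(f) = Tr^{(k)}_U(E_U(f))` for all `U ∈ I`, `W ∈ C_R` and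
    `f ∈ End(U⊗W)`;
(2) `Tr^{(k)}_V(g∘f) = Tr^{(k)}_U(f∘g)` for all `U, V ∈ I` and all `f : V → U`,
    `g : U → V`.
-/

open CategoryTheory MonoidalCategory

/-- A rigid spherical monoidal `R`-linear category, encoded through its spherical
trace functions on endomorphisms and their standard properties. -/
structure SphericalTraceData (R : Type*) [CommRing R] (C : Type*) [Category C]
    [MonoidalCategory C] [Preadditive C] [Linear R C] where
  /-- the spherical trace of an endomorphism, an `R`-linear function -/
  tr : ∀ X : C, (X ⟶ X) →ₗ[R] R
  /-- cyclicity of the trace -/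
  tr_comm : ∀ {X Y : C} (f : X ⟶ Y) (g : Y ⟶ X), tr X (f ≫ g) = tr Y (g ≫ f)
  /-- `End (𝟙_ C) = R` -/
  tr_unit : ∀ f : 𝟙_ C ⟶ 𝟙_ C, f = tr (𝟙_ C) f • 𝟙 (𝟙_ C)
  /-- multiplicativity of the trace on tensor products -/
  tr_tensor : ∀ {X Y : C} (a : X ⟶ X) (b : Y ⟶ Y),
      tr (X ⊗ Y) (a ⊗ₘ b) = tr X a * tr Y b
  /-- the partial trace (conditional expectation) onto the first factor -/
  E : ∀ X Y : C, (X ⊗ Y ⟶ X ⊗ Y) →ₗ[R] (X ⟶ X)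
  tr_E : ∀ {X Y : C} (a : X ⊗ Y ⟶ X ⊗ Y), tr X (E X Y a) = tr (X ⊗ Y) a
  /-- the partial trace (conditional expectation) onto the second factor -/
  E' : ∀ X Y : C, (X ⊗ Y ⟶ X ⊗ Y) →ₗ[R] (Y ⟶ Y)
  tr_E' : ∀ {X Y : C} (a : X ⊗ Y ⟶ X ⊗ Y), tr Y (E' X Y a) = tr (X ⊗ Y) a
  /-- rigidity/sphericality: a trace against a tensor product morphism `f ⊗ g`
  can be rewritten as a trace against `f` alone (Barrett–Westbury) -/
  tensorHom_trace_right : ∀ {X Y W Z : C} (f : X ⟶ Y) (g : W ⟶ Z) (h : Y ⊗ Z ⟶ X ⊗ W),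
      ∃ h' : Y ⟶ X, tr (X ⊗ W) ((f ⊗ₘ g) ≫ h) = tr X (f ≫ h')
  tensorHom_trace_left : ∀ {X Y W Z : C} (f : X ⟶ Y) (g : W ⟶ Z) (h : Z ⊗ Y ⟶ W ⊗ X),
      ∃ h' : Y ⟶ X, tr (W ⊗ X) ((g ⊗ₘ f) ≫ h) = tr X (f ≫ h')

/-- A thick (tensor) ideal of a monoidal category: a class of objects closed under
tensoring with arbitrary objects on either side and under retracts. -/
structure IsThickIdeal {C : Type*} [Category C] [MonoidalCategory C] (I : Set C) : Prop where
  tensor_right : ∀ X ∈ I, ∀ Y : C, X ⊗ Y ∈ I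
  tensor_left : ∀ X ∈ I, ∀ Y : C, Y ⊗ X ∈ I
  retract : ∀ {X Y : C}, Y ∈ I → ∀ (α : X ⟶ Y) (β : Y ⟶ X), α ≫ β = 𝟙 X → X ∈ I

variable {R : Type*} [CommRing R] {C : Type*} [Category C] [MonoidalCategory C]
  [Preadditive C] [Linear R C]

/-- An object `X` is `I`-negligible if `Tr_X a ∈ I` for every endomorphism `a` of `X`. -/
def IsNegligibleObj (Θ : SphericalTraceData R C) (I : Ideal R) (X : C) : Prop :=
  ∀ a : X ⟶ X, Θ.tr X a ∈ I

theorem modifiedTrace_exists [IsLocalRing R] [IsDomain R] (hR : ¬ IsField R)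
    (p : R) (hp : IsLocalRing.maximalIdeal R = Ideal.span {p})
    (Θ : SphericalTraceData R C) (k : ℕ)
    (I : Set C) (hI : IsThickIdeal I)
    (hneg : ∀ X ∈ I, IsNegligibleObj Θ ((IsLocalRing.maximalIdeal R) ^ k) X) :
    -- for `X ∈ I` every endomorphism has trace in `(p^k)` ...
    (∀ X ∈ I, ∀ a : X ⟶ X, Θ.tr X a ∈ Ideal.span {p ^ k}) ∧
    -- (unique) family of `R`-linear functions, and it is a trace on `I`:
    ∃ t : ∀ X : C, X ∈ I → ((X ⟶ X) →ₗ[R] R),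
      (∀ (X : C) (hX : X ∈ I) (a : X ⟶ X), p ^ k * t X hX a = Θ.tr X a) ∧
      (∀ (X : C) (hX : X ∈ I) (a : X ⟶ X) (b : R),
          p ^ k * b = Θ.tr X a → b = t X hX a) ∧
      -- (1) compatibility with the partial trace
      (∀ (U : C) (hU : U ∈ I) (W : C) (f : U ⊗ W ⟶ U ⊗ W),
          t (U ⊗ W) (hI.tensor_right U hU W) f = t U hU (Θ.E U W f)) ∧
      -- (2) cyclicity
      (∀ (U V : C) (hU : U ∈ I) (hV : V ∈ I) (f : V ⟶ U) (g : U ⟶ V),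
          t V hV (f ≫ g) = t U hU (g ≫ f)) := by

  have hp0 : p ≠ 0 := by
    intro h
    apply hR
    rw [IsLocalRing.isField_iff_maximalIdeal_eq, hp, h]
    simp
  have hpk : (p : R) ^ k ≠ 0 := pow_ne_zero k hp0
  have hmem : ∀ X ∈ I, ∀ a : X ⟶ X, Θ.tr X a ∈ Ideal.span {p ^ k} := by
    intro X hX a
    have := hneg X hX a
    rwa [hp, Ideal.span_singleton_pow] at this
  have hdvd : ∀ (X : C) (hX : X ∈ I) (a : X ⟶ X), ∃ b, p ^ k * b = Θ.tr X a := by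
    intro X hX a
    obtain ⟨b, hb⟩ := Ideal.mem_span_singleton.mp (hmem X hX a)
    exact ⟨b, hb.symm⟩
  have key : ∀ (X : C) (hX : X ∈ I), ∃ u : (X ⟶ X) →ₗ[R] R,
      ∀ a : X ⟶ X, p ^ k * u a = Θ.tr X a := by
    intro X hX
    refine ⟨{ toFun := fun a => (hdvd X hX a).choose
              map_add' := fun a b => ?_
              map_smul' := fun r a => ?_ }, fun a => (hdvd X hX a).choose_spec⟩
    · apply mul_left_cancel₀ hpk
      rw [(hdvd X hX (a + b)).choose_spec, mul_add, (hdvd X hX a).choose_spec,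
        (hdvd X hX b).choose_spec, map_add]
    · apply mul_left_cancel₀ hpk
      rw [(hdvd X hX (r • a)).choose_spec, map_smul, RingHom.id_apply, smul_eq_mul,
        smul_eq_mul, mul_left_comm, (hdvd X hX a).choose_spec]
  choose t ht using key
  refine ⟨hmem, t, ht, ?_, ?_, ?_⟩
  · intro X hX a b hb
    exact mul_left_cancel₀ hpk (hb.trans (ht X hX a).symm)
  · intro U hU W f
    apply mul_left_cancel₀ hpk
    rw [ht, ht, Θ.tr_E]
  · intro U V hU hV f g
    apply mul_left_cancel₀ hpk
    rw [ht, ht, Θ.tr_comm]
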